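/- There is a universal constant C > 0 with the following property. Let X be a Banach space, π an action of ℍ on X by linear isometric automorphisms, and f : ℍ → X a 1-Lipschitz 1-cocycle for π. Then for every m, n ∈ ℕ: ‖f(c^{n²}) − P_m f(c^{n²})‖ ≤ C · 2^{m/3} · n^{1/3}. -/
import Mathlib


open scoped BigOperators

/-- The discrete Heisenberg group `ℍ`, realized via the coordinates of the
3×3 upper-triangular integer matrices `[[1, x, z], [0, 1, y], [0, 0, 1]]`
with unit diagonal. -/
@[ext] structure Heis where
  x : ℤ
  y : ℤ
  z : ℤ

namespace Heis

instance : One Heis := ⟨⟨0, 0, 0⟩⟩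
instance : Mul Heis := ⟨fun g h => ⟨g.x + h.x, g.y + h.y, g.z + h.z + g.x * h.y⟩⟩
instance : Inv Heis := ⟨fun g => ⟨-g.x, -g.y, -g.z + g.x * g.y⟩⟩

@[simp] lemma mul_def (g h : Heis) :
    g * h = ⟨g.x + h.x, g.y + h.y, g.z + h.z + g.x * h.y⟩ := rfl
@[simp] lemma one_def : (1 : Heis) = ⟨0, 0, 0⟩ := rfl
@[simp] lemma inv_def (g : Heis) : g⁻¹ = ⟨-g.x, -g.y, -g.z + g.x * g.y⟩ := rfl

instance : Group Heis where
  mul_assoc g h k := by ext <;> simp <;> ring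
  one_mul g := by ext <;> simp
  mul_one g := by ext <;> simp
  inv_mul_cancel g := by ext <;> simp <;> ring

/-- The generator `a`. -/
def A : Heis := ⟨1, 0, 0⟩
/-- The generator `b`. -/
def B : Heis := ⟨0, 1, 0⟩
/-- The commutator `c = a * b * a⁻¹ * b⁻¹`, a central element. -/
def C : Heis := A * B * A⁻¹ * B⁻¹
/-- The symmetric generating set `S = {a, b, a⁻¹, b⁻¹}`. -/
def S : Set Heis := {A, B, A⁻¹, B⁻¹}

/-- The word length of `g` with respect to the generating set `S`. -/
noncomputable def wordLength (g : Heis) : ℕ :=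
  sInf {n : ℕ | ∃ l : List Heis, l.length = n ∧ (∀ s ∈ l, s ∈ S) ∧ l.prod = g}

/-- The left-invariant word metric `d_W` on `ℍ` associated to `S`. -/
noncomputable def dW (g h : Heis) : ℕ := wordLength (g⁻¹ * h)

end Heis

namespace HeisAux
open Heis

lemma A_pow (k : ℕ) : A ^ k = ⟨k, 0, 0⟩ := by
  induction k with
  | zero => ext <;> simp
  | succ k ih => rw [pow_succ, ih]; ext <;> simp [A] <;> push_cast <;> ring

lemma B_pow (k : ℕ) : B ^ k = ⟨0, k, 0⟩ := by
  induction k with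
  | zero => ext <;> simp
  | succ k ih => rw [pow_succ, ih]; ext <;> simp [B] <;> push_cast <;> ring

lemma C_eq : C = ⟨0, 0, 1⟩ := by ext <;> simp [C, A, B]

lemma C_pow (k : ℕ) : C ^ k = ⟨0, 0, k⟩ := by
  induction k with
  | zero => ext <;> simp
  | succ k ih => rw [pow_succ, ih, C_eq]; ext <;> simp <;> push_cast <;> ring

lemma wordLength_le (g : Heis) (l : List Heis) (hmem : ∀ s ∈ l, s ∈ S)
    (hprod : l.prod = g) : wordLength g ≤ l.length :=
  Nat.sInf_le ⟨l, rfl, hmem, hprod⟩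

/-- word for `C^r` of length `4r` -/
def cword : ℕ → List Heis
  | 0 => []
  | r + 1 => [A, B, A⁻¹, B⁻¹] ++ cword r

lemma cword_length (r : ℕ) : (cword r).length = 4 * r := by
  induction r with
  | zero => rfl
  | succ r ih => simp [cword, ih]; ring

lemma cword_mem (r : ℕ) : ∀ s ∈ cword r, s ∈ S := by
  induction r with
  | zero => simp [cword]
  | succ r ih =>
    intro s hs
    simp only [cword, List.mem_append] at hs
    rcases hs with hs | hs
    · simp only [List.mem_cons, List.mem_singleton] at hs
      rcases hs with rfl | rfl | rfl | h
      · exact Or.inl rfl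
      · exact Or.inr (Or.inl rfl)
      · exact Or.inr (Or.inr (Or.inl rfl))
      · simp at h; subst h; exact Or.inr (Or.inr (Or.inr rfl))
    · exact ih s hs

lemma cword_prod (r : ℕ) : (cword r).prod = C ^ r := by
  induction r with
  | zero => rfl
  | succ r ih =>
    rw [cword, List.prod_append, ih, pow_succ]
    simp [C, mul_assoc]
    group

/-- word for `C^(k^2)` of length `4k` -/
def sqword (k : ℕ) : List Heis :=
  List.replicate k A ++ List.replicate k B ++ List.replicate k A⁻¹ ++ List.replicate k B⁻¹

lemma sqword_length (k : ℕ) : (sqword k).length = 4 * k := by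
  simp [sqword]; ring

lemma sqword_mem (k : ℕ) : ∀ s ∈ sqword k, s ∈ S := by
  intro s hs
  simp only [sqword, List.mem_append, List.mem_replicate] at hs
  rcases hs with ((⟨_, rfl⟩ | ⟨_, rfl⟩) | ⟨_, rfl⟩) | ⟨_, rfl⟩
  · exact Or.inl rfl
  · exact Or.inr (Or.inl rfl)
  · exact Or.inr (Or.inr (Or.inl rfl))
  · exact Or.inr (Or.inr (Or.inr rfl))

lemma sqword_prod (k : ℕ) : (sqword k).prod = C ^ (k ^ 2) := by
  rw [sqword, List.prod_append, List.prod_append, List.prod_append]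
  simp only [List.prod_replicate, inv_pow]
  rw [A_pow, B_pow, C_pow]
  ext <;> simp <;> push_cast <;> ring

lemma wordLength_C_sq (n : ℕ) : wordLength (C ^ (n ^ 2)) ≤ 4 * n := by
  have := wordLength_le (C ^ (n ^ 2)) (sqword n) (sqword_mem n) (sqword_prod n)
  rwa [sqword_length] at this

lemma wordLength_C_pow (j : ℕ) : wordLength (C ^ j) ≤ 12 * Nat.sqrt j := by
  set k := Nat.sqrt j with hk
  have hk2 : k ^ 2 ≤ j := Nat.sqrt_le' j
  have hr : j - k ^ 2 ≤ 2 * k := by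
    have h1 : j < (Nat.succ k) ^ 2 := Nat.lt_succ_sqrt' j
    have h2 : (Nat.succ k) ^ 2 = k ^ 2 + 2 * k + 1 := by rw [Nat.succ_eq_add_one]; ring
    rw [h2] at h1
    have h3 : j ≤ k ^ 2 + 2 * k := Nat.lt_succ_iff.mp h1
    exact Nat.sub_le_iff_le_add.mpr (le_trans h3 (le_of_eq (add_comm _ _)))
  have hprod : (sqword k ++ cword (j - k ^ 2)).prod = C ^ j := by
    rw [List.prod_append, sqword_prod, cword_prod, ← pow_add]
    congr 1
    exact Nat.add_sub_cancel' hk2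
  have hmem : ∀ s ∈ sqword k ++ cword (j - k ^ 2), s ∈ S := by
    intro s hs
    rcases List.mem_append.1 hs with h | h
    · exact sqword_mem k s h
    · exact cword_mem _ s h
  have hle := wordLength_le _ _ hmem hprod
  rw [List.length_append, sqword_length, cword_length] at hle
  generalize hR : j - k ^ 2 = r at hle hr
  omega

end HeisAux


/-- The averaging operator `P_n = 2^{−n}·∑_{j<2^n} π(c)^j` associated to an action `π` of
`ℍ` by linear isometric automorphisms, where `c = aba⁻¹b⁻¹`. -/
noncomputable def Pop {X : Type*} [NormedAddCommGroup X] [NormedSpace ℝ X]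
    (π : Heis →* (X ≃ₗᵢ[ℝ] X)) (n : ℕ) (v : X) : X :=
  ((2 : ℝ) ^ n)⁻¹ • ∑ j ∈ Finset.range (2 ^ n), (π Heis.C ^ j) v

namespace HeisAux

lemma min_le_cube (x y : ℝ) (hx : 0 ≤ x) (hy : 0 ≤ y) :
    min x y ≤ x ^ ((1 : ℝ)/3) * y ^ ((2 : ℝ)/3) := by
  rcases eq_or_lt_of_le hx with rfl | hx
  · simpa using mul_nonneg (Real.rpow_nonneg le_rfl _) (Real.rpow_nonneg hy _)
  rcases eq_or_lt_of_le hy with rfl | hy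
  · simpa using mul_nonneg (Real.rpow_nonneg hx.le _) (Real.rpow_nonneg le_rfl _)
  rcases le_total x y with h | h
  · calc min x y ≤ x := min_le_left _ _
      _ = x ^ ((1 : ℝ)/3) * x ^ ((2 : ℝ)/3) := by
          rw [← Real.rpow_add hx]; norm_num
      _ ≤ x ^ ((1 : ℝ)/3) * y ^ ((2 : ℝ)/3) := by
          gcongr
  · calc min x y ≤ y := min_le_right _ _
      _ = y ^ ((1 : ℝ)/3) * y ^ ((2 : ℝ)/3) := by
          rw [← Real.rpow_add hy]; norm_num
      _ ≤ x ^ ((1 : ℝ)/3) * y ^ ((2 : ℝ)/3) := by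
          gcongr

lemma eight_rpow : (8 : ℝ) ^ ((1 : ℝ)/3) = 2 := by
  have h : (8:ℝ) = (2:ℝ) ^ (3:ℝ) := by
    rw [show (3:ℝ) = ((3:ℕ):ℝ) by norm_num, Real.rpow_natCast]; norm_num
  rw [h, ← Real.rpow_mul (by norm_num), show (3:ℝ) * (1/3) = 1 by norm_num, Real.rpow_one]

lemma half_pow (m : ℕ) : ((2:ℝ) ^ ((m:ℝ)/2)) ^ ((2:ℝ)/3) = (2:ℝ) ^ ((m:ℝ)/3) := by
  rw [← Real.rpow_mul (by norm_num)]
  congr 1; ring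

lemma sqrt_two_pow (m : ℕ) : Real.sqrt ((2:ℝ) ^ m) = (2:ℝ) ^ ((m:ℝ)/2) := by
  rw [Real.sqrt_eq_rpow, ← Real.rpow_natCast 2 m, ← Real.rpow_mul (by norm_num)]
  congr 1; ring

end HeisAux

/-- **Lemma 4.3.** There is a universal `C > 0` such that: for every Banach space `X`,
action `π` of `ℍ` on `X` by linear isometric automorphisms, and `1`-Lipschitz `1`-cocycle
`f : ℍ → X`, for all `m, n ∈ ℕ` we have `‖f(c^{n²}) − P_m f(c^{n²})‖ ≤ C·2^{m/3}·n^{1/3}`. -/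
theorem heisenberg_cocycle_coboundary_bound :
    ∃ C : ℝ, 0 < C ∧
      ∀ (X : Type*) [NormedAddCommGroup X] [NormedSpace ℝ X] [CompleteSpace X],
        ∀ (π : Heis →* (X ≃ₗᵢ[ℝ] X)) (f : Heis → X),
          (∀ g h : Heis, f (g * h) = π g (f h) + f g) →
          (∀ g h : Heis, ‖f g - f h‖ ≤ (Heis.dW g h : ℝ)) →
          ∀ m n : ℕ, 1 ≤ m → 1 ≤ n →
            ‖f (Heis.C ^ (n ^ 2)) - Pop π m (f (Heis.C ^ (n ^ 2)))‖ ≤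
              C * (2 : ℝ) ^ ((m : ℝ) / 3) * (n : ℝ) ^ ((1 : ℝ) / 3) := by
  classical
  refine ⟨48, by norm_num, ?_⟩
  intro X _ _ _ π f hcoc hlip m n hm hn
  open HeisAux in
  -- f 1 = 0
  have hf1 : f 1 = 0 := by
    have h := hcoc 1 1
    simp only [one_mul, map_one, LinearIsometryEquiv.coe_one, id_eq] at h
    exact (left_eq_add.mp h)
  set v := f (Heis.C ^ (n ^ 2)) with hv
  -- norm of v
  have hvnorm : ‖v‖ ≤ 4 * (n : ℝ) := by
    have h := hlip 1 (Heis.C ^ (n ^ 2))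
    rw [hf1, zero_sub, norm_neg] at h
    have harg : Heis.dW 1 (Heis.C ^ (n^2)) = Heis.wordLength (Heis.C ^ (n^2)) := by
      rw [Heis.dW, inv_one, one_mul]
    rw [harg] at h
    refine h.trans ?_
    have := HeisAux.wordLength_C_sq n
    calc (Heis.wordLength (Heis.C ^ (n^2)) : ℝ) ≤ ((4 * n : ℕ) : ℝ) := by exact_mod_cast this
      _ = 4 * (n : ℝ) := by push_cast; ring
  -- termwise bound
  set M : ℝ := min (8 * (n:ℝ)) (24 * (2:ℝ) ^ ((m:ℝ)/2)) with hM
  have hterm : ∀ j ∈ Finset.range (2 ^ m), ‖v - (π Heis.C ^ j) v‖ ≤ M := by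
    intro j hj
    have hjlt : j < 2 ^ m := Finset.mem_range.mp hj
    have hπ : (π Heis.C ^ j) v = (π (Heis.C ^ j)) v := by rw [map_pow]
    refine le_min ?_ ?_
    · -- bound by 2‖v‖ ≤ 8n
      calc ‖v - (π Heis.C ^ j) v‖ ≤ ‖v‖ + ‖(π Heis.C ^ j) v‖ := norm_sub_le _ _
        _ = ‖v‖ + ‖v‖ := by rw [hπ, LinearIsometryEquiv.norm_map]
        _ ≤ 4 * (n:ℝ) + 4 * (n:ℝ) := by gcongr
        _ = 8 * (n:ℝ) := by ring
    · -- bound by 2·wordLength(C^j) ≤ 24·sqrt j ≤ 24·2^{m/2}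
      have hkey : (π (Heis.C ^ j)) v = f (Heis.C ^ (j + n^2)) - f (Heis.C ^ j) := by
        have h := hcoc (Heis.C ^ j) (Heis.C ^ (n^2))
        rw [← pow_add] at h
        rw [h]; abel
      have e1 : ‖v - f (Heis.C ^ (j + n^2))‖ ≤ (Heis.wordLength (Heis.C ^ j) : ℝ) := by
        have harg : (Heis.C ^ (n^2))⁻¹ * Heis.C ^ (j + n^2) = Heis.C ^ j := by
          rw [add_comm, pow_add, inv_mul_cancel_left]
        have h := hlip (Heis.C ^ (n^2)) (Heis.C ^ (j + n^2))
        rwa [Heis.dW, harg] at h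
      have e2 : ‖f (Heis.C ^ j)‖ ≤ (Heis.wordLength (Heis.C ^ j) : ℝ) := by
        have h := hlip 1 (Heis.C ^ j)
        rw [hf1, zero_sub, norm_neg, Heis.dW, inv_one, one_mul] at h
        exact h
      have ewl : (Heis.wordLength (Heis.C ^ j) : ℝ) ≤ 12 * (2:ℝ) ^ ((m:ℝ)/2) := by
        have h1 := HeisAux.wordLength_C_pow j
        have h2 : ((Heis.wordLength (Heis.C ^ j)) : ℝ) ≤ 12 * ((Nat.sqrt j : ℕ) : ℝ) := by
          exact_mod_cast h1
        refine h2.trans ?_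
        have h3 : ((Nat.sqrt j : ℕ) : ℝ) ≤ Real.sqrt j := Real.nat_sqrt_le_real_sqrt
        have h4 : Real.sqrt j ≤ Real.sqrt ((2:ℝ)^m) := by
          apply Real.sqrt_le_sqrt
          calc (j:ℝ) ≤ ((2^m : ℕ) : ℝ) := by exact_mod_cast hjlt.le
            _ = (2:ℝ)^m := by push_cast; ring
        rw [HeisAux.sqrt_two_pow] at h4
        nlinarith [h3.trans h4]
      calc ‖v - (π Heis.C ^ j) v‖
          = ‖(v - f (Heis.C ^ (j + n^2))) + f (Heis.C ^ j)‖ := by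
            rw [hπ, hkey]; congr 1; abel
        _ ≤ ‖v - f (Heis.C ^ (j + n^2))‖ + ‖f (Heis.C ^ j)‖ := norm_add_le _ _
        _ ≤ (Heis.wordLength (Heis.C ^ j) : ℝ) + (Heis.wordLength (Heis.C ^ j) : ℝ) := by
            gcongr
        _ ≤ 12 * (2:ℝ) ^ ((m:ℝ)/2) + 12 * (2:ℝ) ^ ((m:ℝ)/2) := by gcongr
        _ = 24 * (2:ℝ) ^ ((m:ℝ)/2) := by ring
  -- rewrite the difference as an average
  have hpos : (0:ℝ) < (2:ℝ)^m := by positivity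
  have hrw : v - Pop π m v = ((2:ℝ)^m)⁻¹ • ∑ j ∈ Finset.range (2^m), (v - (π Heis.C ^ j) v) := by
    rw [Pop, Finset.sum_sub_distrib, smul_sub]
    congr 1
    rw [Finset.sum_const, Finset.card_range, ← Nat.cast_smul_eq_nsmul ℝ, smul_smul]
    rw [show (((2^m : ℕ) : ℝ)) = (2:ℝ)^m by push_cast; ring, inv_mul_cancel₀ hpos.ne', one_smul]
  have hMnonneg : (0:ℝ) ≤ M := le_min (by positivity) (by positivity)
  have hnorm : ‖v - Pop π m v‖ ≤ M := by
    rw [hrw, norm_smul]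
    have h1 : ‖∑ j ∈ Finset.range (2^m), (v - (π Heis.C ^ j) v)‖ ≤ (2^m : ℕ) • M := by
      refine (norm_sum_le _ _).trans ?_
      have := Finset.sum_le_card_nsmul (Finset.range (2^m)) (fun j => ‖v - (π Heis.C ^ j) v‖) M hterm
      simpa using this
    have h2 : ((2^m : ℕ) : ℝ) • M = (2:ℝ)^m * M := by
      rw [smul_eq_mul]; push_cast; ring
    rw [nsmul_eq_mul] at h1
    calc ‖((2:ℝ)^m)⁻¹‖ * ‖∑ j ∈ Finset.range (2^m), (v - (π Heis.C ^ j) v)‖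
        ≤ ‖((2:ℝ)^m)⁻¹‖ * (((2^m : ℕ):ℝ) * M) := by gcongr
      _ = M := by
          rw [Real.norm_eq_abs, abs_of_pos (inv_pos.mpr hpos),
            show ((2^m:ℕ):ℝ) = (2:ℝ)^m by push_cast; ring,
            inv_mul_cancel_left₀ hpos.ne']
  -- final numeric estimate
  refine hnorm.trans ?_
  have hcube := HeisAux.min_le_cube (8 * (n:ℝ)) (24 * (2:ℝ) ^ ((m:ℝ)/2)) (by positivity) (by positivity)
  refine (le_trans hcube ?_)
  have e1 : (8 * (n:ℝ)) ^ ((1:ℝ)/3) = 2 * (n:ℝ) ^ ((1:ℝ)/3) := by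
    rw [Real.mul_rpow (by norm_num) (by positivity), HeisAux.eight_rpow]
  have e2 : (24 * (2:ℝ) ^ ((m:ℝ)/2)) ^ ((2:ℝ)/3) ≤ 24 * (2:ℝ) ^ ((m:ℝ)/3) := by
    rw [Real.mul_rpow (by norm_num) (by positivity), HeisAux.half_pow]
    have h24 : (24:ℝ) ^ ((2:ℝ)/3) ≤ 24 := by
      calc (24:ℝ) ^ ((2:ℝ)/3) ≤ (24:ℝ) ^ (1:ℝ) :=
            Real.rpow_le_rpow_of_exponent_le (by norm_num) (by norm_num)
        _ = 24 := Real.rpow_one 24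
    exact mul_le_mul_of_nonneg_right h24 (by positivity)
  calc (8 * (n:ℝ)) ^ ((1:ℝ)/3) * (24 * (2:ℝ) ^ ((m:ℝ)/2)) ^ ((2:ℝ)/3)
      ≤ (2 * (n:ℝ) ^ ((1:ℝ)/3)) * (24 * (2:ℝ) ^ ((m:ℝ)/3)) := by
        rw [e1]
        gcongr
    _ = 48 * (2:ℝ) ^ ((m:ℝ)/3) * (n:ℝ) ^ ((1:ℝ)/3) := by ring
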